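/- For Borel probability measures μ, μ̃ on ℝ with quantile functions F⁻¹ and F̃⁻¹ and finite q-th moments (q ≥ 1), the quantity ∫₀¹ |F⁻¹(p) − F̃⁻¹(p)|^q dp is a lower bound for ∫ |x − x̃|^q dγ(x, x̃) over all couplings γ of μ and μ̃; that is, the q-Wasserstein distance to the q-th power equals the L^q distance between quantile functions. -/

import Mathlib

open MeasureTheory ProbabilityTheory

/-- The left-continuous quantile function of a Borel probability measure on ℝ. -/
noncomputable def quantileFn (m : Measure ℝ) (p : ℝ) : ℝ :=
  sInf {x : ℝ | p ≤ (m (Set.Iic x)).toReal}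


section AuxWasserstein
open Set Filter Topology ENNReal intervalIntegral

noncomputable def qf (m : MeasureTheory.Measure ℝ) : ℝ → ℝ :=
  (Set.Ioo (0:ℝ) 1).piecewise (quantileFn m) 0

noncomputable def Wq (q s t : ℝ) : ℝ≥0∞ :=
  if s < t then ENNReal.ofReal (q * (q-1) * (t-s) ^ (q-2)) else 0

def setA (s t : ℝ) : Set (ℝ × ℝ) := {z | z.1 ≤ s ∧ t < z.2}
def setB (s t : ℝ) : Set (ℝ × ℝ) := {z | z.2 ≤ s ∧ t < z.1}

lemma measurable_setA (s t : ℝ) : MeasurableSet (setA s t) :=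
  (measurableSet_le measurable_fst measurable_const).inter
    (measurableSet_lt measurable_const measurable_snd)

lemma measurable_setB (s t : ℝ) : MeasurableSet (setB s t) :=
  (measurableSet_le measurable_snd measurable_const).inter
    (measurableSet_lt measurable_const measurable_fst)

variable {μ : Measure ℝ} [IsProbabilityMeasure μ]

lemma quantileFn_set_eq (p : ℝ) :
    {x : ℝ | p ≤ (μ (Set.Iic x)).toReal} = {x : ℝ | p ≤ cdf μ x} := by
  ext x; simp [cdf_eq_real, measureReal_def]

lemma quantile_set_nonempty {p : ℝ} (hp1 : p < 1) :
    {x : ℝ | p ≤ cdf μ x}.Nonempty := by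
  obtain ⟨x, hx⟩ := ((tendsto_cdf_atTop μ).eventually (eventually_ge_nhds hp1)).exists
  exact ⟨x, hx⟩

lemma quantile_set_bddBelow {p : ℝ} (hp0 : 0 < p) :
    BddBelow {x : ℝ | p ≤ cdf μ x} := by
  obtain ⟨x, hx⟩ := ((tendsto_cdf_atBot μ).eventually (eventually_lt_nhds hp0)).exists
  refine ⟨x, fun y hy => ?_⟩
  by_contra h
  push_neg at h
  exact absurd (le_trans hy (monotone_cdf μ h.le)) (not_le.2 hx)

lemma quantile_mem {p : ℝ} (hp0 : 0 < p) (hp1 : p < 1) :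
    p ≤ cdf μ (quantileFn μ p) := by
  have hne := quantile_set_nonempty (μ := μ) hp1
  have hbd := quantile_set_bddBelow (μ := μ) hp0
  set a := sInf {x : ℝ | p ≤ cdf μ x} with ha
  have key : ∀ x, a < x → p ≤ cdf μ x := by
    intro x hx
    obtain ⟨y, hy, hyx⟩ := (csInf_lt_iff hbd hne).1 hx
    exact hy.trans (monotone_cdf μ hyx.le)
  have : Tendsto (cdf μ) (𝓝[>] a) (𝓝 (cdf μ a)) :=
    ((cdf μ).right_continuous a).mono_left (nhdsWithin_mono a Ioi_subset_Ici_self)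
  have hkey : p ≤ cdf μ a :=
    ge_of_tendsto this (eventually_nhdsWithin_of_forall (fun x hx => key x hx))
  rw [quantileFn, quantileFn_set_eq]
  exact hkey

lemma quantile_le_iff {p s : ℝ} (hp0 : 0 < p) (hp1 : p < 1) :
    quantileFn μ p ≤ s ↔ p ≤ (μ (Set.Iic s)).toReal := by
  rw [← measureReal_def, ← cdf_eq_real (μ := μ) s]
  constructor
  · intro h
    exact (quantile_mem hp0 hp1).trans (monotone_cdf μ h)
  · intro h
    rw [quantileFn, quantileFn_set_eq]
    exact csInf_le (quantile_set_bddBelow hp0) h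

variable {μ : Measure ℝ} [IsProbabilityMeasure μ]

lemma qf_eq_on {p : ℝ} (hp : p ∈ Ioo (0:ℝ) 1) : qf μ p = quantileFn μ p :=
  Set.piecewise_eq_of_mem _ _ _ hp

lemma qf_le_iff {p s : ℝ} (hp : p ∈ Ioo (0:ℝ) 1) :
    qf μ p ≤ s ↔ p ≤ (μ (Set.Iic s)).toReal := by
  rw [qf_eq_on hp]; exact quantile_le_iff hp.1 hp.2

lemma measurable_qf' : Measurable (qf μ) := by
  apply measurable_of_Iic
  intro c
  by_cases hc : (0:ℝ) ≤ c
  · have : qf μ ⁻¹' Iic c = (Ioo (0:ℝ) 1 ∩ Iic ((μ (Set.Iic c)).toReal)) ∪ (Ioo (0:ℝ) 1)ᶜ := by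
      ext p
      by_cases hp : p ∈ Ioo (0:ℝ) 1
      · simp [mem_preimage, qf_le_iff hp, hp]
      · simp [mem_preimage, qf, Set.piecewise_eq_of_notMem _ _ _ hp, hp, hc]
    rw [this]
    exact ((measurableSet_Ioo.inter measurableSet_Iic).union measurableSet_Ioo.compl)
  · have : qf μ ⁻¹' Iic c = Ioo (0:ℝ) 1 ∩ Iic ((μ (Set.Iic c)).toReal) := by
      ext p
      by_cases hp : p ∈ Ioo (0:ℝ) 1
      · simp [mem_preimage, qf_le_iff hp, hp]
      · simp [mem_preimage, qf, Set.piecewise_eq_of_notMem _ _ _ hp, hp, hc]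
    rw [this]
    exact measurableSet_Ioo.inter measurableSet_Iic

instance : IsProbabilityMeasure (volume.restrict (Ioo (0:ℝ) 1)) := by
  constructor
  simp [Real.volume_Ioo]

lemma map_qf : Measure.map (qf μ) (volume.restrict (Ioo (0:ℝ) 1)) = μ := by
  refine Measure.ext_of_Iic _ μ (fun c => ?_)
  rw [Measure.map_apply measurable_qf' measurableSet_Iic,
    Measure.restrict_apply (measurable_qf' measurableSet_Iic)]
  have hset : qf μ ⁻¹' Iic c ∩ Ioo (0:ℝ) 1 = Iic ((μ (Set.Iic c)).toReal) ∩ Ioo (0:ℝ) 1 := by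
    ext p
    constructor
    · rintro ⟨h1, h2⟩; exact ⟨(qf_le_iff h2).1 h1, h2⟩
    · rintro ⟨h1, h2⟩; exact ⟨(qf_le_iff h2).2 h1, h2⟩
  rw [hset]
  set F := (μ (Set.Iic c)).toReal with hF
  have hF0 : 0 ≤ F := ENNReal.toReal_nonneg
  have hF1 : F ≤ 1 := by
    rw [hF]
    exact ENNReal.toReal_le_of_le_ofReal one_pos.le (by simpa using prob_le_one)
  have hle : volume (Iic F ∩ Ioo (0:ℝ) 1) ≤ ENNReal.ofReal F := by
    have hsub : Iic F ∩ Ioo (0:ℝ) 1 ⊆ Ioc (0:ℝ) F := fun p hp => mem_Ioc.2 ⟨hp.2.1, hp.1⟩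
    calc volume (Iic F ∩ Ioo (0:ℝ) 1) ≤ volume (Ioc (0:ℝ) F) := measure_mono hsub
      _ = ENNReal.ofReal F := by simp [Real.volume_Ioc]
  have hge : ENNReal.ofReal F ≤ volume (Iic F ∩ Ioo (0:ℝ) 1) := by
    have : Ioo (0:ℝ) F ⊆ Iic F ∩ Ioo (0:ℝ) 1 := by
      intro p hp
      exact ⟨hp.2.le, hp.1, lt_of_lt_of_le hp.2 hF1⟩
    calc ENNReal.ofReal F = volume (Ioo (0:ℝ) F) := by simp [Real.volume_Ioo]
      _ ≤ _ := measure_mono this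
  have : volume (Iic F ∩ Ioo (0:ℝ) 1) = ENNReal.ofReal F := le_antisymm hle hge
  rw [this, hF, ENNReal.ofReal_toReal (measure_ne_top μ _)]

lemma couple_lower {μ ν : Measure ℝ} [IsProbabilityMeasure μ] [IsProbabilityMeasure ν]
    {γ : Measure (ℝ × ℝ)} [IsProbabilityMeasure γ]
    (h1 : γ.map Prod.fst = μ) (h2 : γ.map Prod.snd = ν) (s t : ℝ) :
    volume.restrict (Ioo (0:ℝ) 1) {p | qf μ p ≤ s ∧ t < qf ν p} ≤
      γ {z : ℝ × ℝ | z.1 ≤ s ∧ t < z.2} := by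
  have hmS : MeasurableSet {p : ℝ | qf μ p ≤ s ∧ t < qf ν p} :=
    (measurableSet_le measurable_qf' measurable_const).inter
      (measurableSet_lt measurable_const measurable_qf')
  rw [Measure.restrict_apply hmS]
  set Fs := (μ (Set.Iic s)).toReal with hFs
  set Gt := (ν (Set.Iic t)).toReal with hGt
  have hsub : {p : ℝ | qf μ p ≤ s ∧ t < qf ν p} ∩ Ioo (0:ℝ) 1 ⊆ Ioc Gt Fs := by
    rintro p ⟨⟨hp1, hp2⟩, hp⟩
    constructor
    · by_contra h
      push_neg at h
      exact absurd ((qf_le_iff hp).2 h) (not_le.2 hp2)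
    · exact (qf_le_iff hp).1 hp1
  have hvol : volume ({p : ℝ | qf μ p ≤ s ∧ t < qf ν p} ∩ Ioo (0:ℝ) 1) ≤
      ENNReal.ofReal (Fs - Gt) := by
    calc _ ≤ volume (Ioc Gt Fs) := measure_mono hsub
      _ = ENNReal.ofReal (Fs - Gt) := Real.volume_Ioc
  refine hvol.trans ?_
  have hofr : ENNReal.ofReal (Fs - Gt) = μ (Set.Iic s) - ν (Set.Iic t) := by
    rw [ENNReal.ofReal_sub _ ENNReal.toReal_nonneg,
      ENNReal.ofReal_toReal (measure_ne_top μ _), ENNReal.ofReal_toReal (measure_ne_top ν _)]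
  rw [hofr, tsub_le_iff_right]
  have hA : μ (Set.Iic s) = γ (Prod.fst ⁻¹' Set.Iic s) := by
    rw [← h1, Measure.map_apply measurable_fst measurableSet_Iic]
  have hB : ν (Set.Iic t) = γ (Prod.snd ⁻¹' Set.Iic t) := by
    rw [← h2, Measure.map_apply measurable_snd measurableSet_Iic]
  rw [hA, hB]
  refine le_trans (measure_mono ?_) (measure_union_le _ _)
  intro z hz
  rcases le_or_gt z.2 t with h | h
  · exact Or.inr h
  · exact Or.inl ⟨hz, h⟩

lemma integrableOn_rpow_sub {a b r : ℝ} (hr : -1 < r) :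
    IntegrableOn (fun t => (t - a) ^ r) (Ioo a b) volume := by
  have h0 : IntervalIntegrable (fun x : ℝ => x ^ r) volume 0 (b - a) :=
    intervalIntegrable_rpow' hr
  have h1 := h0.comp_sub_right a
  rw [zero_add, sub_add_cancel] at h1
  rcases le_or_gt a b with hab | hab
  · exact (h1.1).mono_set Ioo_subset_Ioc_self
  · simp [Ioo_eq_empty_of_le hab.le]

lemma real_int_rpow_sub {a b r : ℝ} (hab : a ≤ b) (hr : -1 < r) :
    ∫ t in Ioo a b, (t - a) ^ r = (b - a) ^ (r + 1) / (r + 1) := by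
  rw [← integral_Ioc_eq_integral_Ioo, ← intervalIntegral.integral_of_le hab,
    intervalIntegral.integral_comp_sub_right (fun x => x ^ r) a, sub_self,
    integral_rpow (Or.inl hr), Real.zero_rpow (by linarith), sub_zero]

lemma helper1 {a b r c : ℝ} (hab : a ≤ b) (hr : -1 < r) (hc : 0 ≤ c) :
    ∫⁻ t in Ioo a b, ENNReal.ofReal (c * (t - a) ^ r) =
      ENNReal.ofReal (c * ((b - a) ^ (r + 1) / (r + 1))) := by
  rw [← ofReal_integral_eq_lintegral_ofReal]
  · rw [MeasureTheory.integral_const_mul, real_int_rpow_sub hab hr]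
  · exact (integrableOn_rpow_sub hr).const_mul c
  · filter_upwards [ae_restrict_mem measurableSet_Ioo] with t ht
    exact mul_nonneg hc (Real.rpow_nonneg (by linarith [ht.1]) _)

lemma integrableOn_rpow_sub' {a b r : ℝ} (hr : -1 < r) :
    IntegrableOn (fun t => (b - t) ^ r) (Ioo a b) volume := by
  have h0 : IntervalIntegrable (fun x : ℝ => x ^ r) volume 0 (b - a) :=
    intervalIntegrable_rpow' hr
  have h1 := h0.comp_sub_left b
  rw [sub_zero, _root_.sub_sub_cancel] at h1
  rcases le_or_gt a b with hab | hab
  · exact (h1.symm.1).mono_set Ioo_subset_Ioc_self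
  · simp [Ioo_eq_empty_of_le hab.le]

lemma real_int_rpow_sub' {a b r : ℝ} (hab : a ≤ b) (hr : -1 < r) :
    ∫ t in Ioo a b, (b - t) ^ r = (b - a) ^ (r + 1) / (r + 1) := by
  rw [← integral_Ioc_eq_integral_Ioo, ← intervalIntegral.integral_of_le hab,
    intervalIntegral.integral_comp_sub_left (fun x => x ^ r) b, sub_self,
    integral_rpow (Or.inl hr), Real.zero_rpow (by linarith), sub_zero]

lemma helper2 {a b r c : ℝ} (hab : a ≤ b) (hr : -1 < r) (hc : 0 ≤ c) :
    ∫⁻ s in Ioo a b, ENNReal.ofReal (c * (b - s) ^ r) =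
      ENNReal.ofReal (c * ((b - a) ^ (r + 1) / (r + 1))) := by
  rw [← ofReal_integral_eq_lintegral_ofReal]
  · rw [MeasureTheory.integral_const_mul, real_int_rpow_sub' hab hr]
  · exact (integrableOn_rpow_sub' hr).const_mul c
  · filter_upwards [ae_restrict_mem measurableSet_Ioo] with t ht
    exact mul_nonneg hc (Real.rpow_nonneg (by linarith [ht.2]) _)

lemma layer_aux {q : ℝ} (hq : 1 < q) {x y : ℝ} (hxy : x ≤ y) :
    ∫⁻ s, ∫⁻ t, (if x ≤ s ∧ t < y then Wq q s t else 0) =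
      ENNReal.ofReal ((y - x) ^ q) := by
  have hq1 : (0:ℝ) < q - 1 := by linarith
  have inner : ∀ s : ℝ, ∫⁻ t, (if x ≤ s ∧ t < y then Wq q s t else 0) =
      (Ico x y).indicator (fun s => ENNReal.ofReal (q * (y - s) ^ (q-1))) s := by
    intro s
    by_cases hs1 : x ≤ s
    · by_cases hs2 : s < y
      · have hfun : (fun t => if x ≤ s ∧ t < y then Wq q s t else 0) =
            (Ioo s y).indicator (fun t => ENNReal.ofReal (q * (q-1) * (t - s) ^ (q-2))) := by
          funext t
          by_cases ht : t ∈ Ioo s y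
          · rw [indicator_of_mem ht]
            rw [if_pos ⟨hs1, ht.2⟩, Wq, if_pos ht.1]
          · rw [indicator_of_notMem ht]
            rw [mem_Ioo, not_and_or] at ht
            rcases ht with ht | ht
            · by_cases hty : t < y
              · rw [if_pos ⟨hs1, hty⟩, Wq, if_neg ht]
              · rw [if_neg (fun h => hty h.2)]
            · rw [if_neg (fun h => ht h.2)]
        rw [hfun, lintegral_indicator measurableSet_Ioo,
          helper1 hs2.le (by linarith) (by positivity)]
        rw [indicator_of_mem (mem_Ico.2 ⟨hs1, hs2⟩)]
        congr 1
        have he : q - 2 + 1 = q - 1 := by ring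
        rw [he]
        field_simp
      · have hfun : (fun t => if x ≤ s ∧ t < y then Wq q s t else 0) = fun _ => 0 := by
          funext t
          by_cases hty : t < y
          · rw [if_pos ⟨hs1, hty⟩, Wq, if_neg (by push_neg at hs2 ⊢; linarith)]
          · rw [if_neg (fun h => hty h.2)]
        rw [hfun, lintegral_zero, indicator_of_notMem (fun h => hs2 h.2)]
    · have hfun : (fun t => if x ≤ s ∧ t < y then Wq q s t else 0) = fun _ => 0 := by
        funext t
        rw [if_neg (fun h => hs1 h.1)]
      rw [hfun, lintegral_zero, indicator_of_notMem (fun h => hs1 h.1)]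
  rw [lintegral_congr inner, lintegral_indicator measurableSet_Ico,
    ← MeasureTheory.Measure.restrict_congr_set Ioo_ae_eq_Ico,
    helper2 hxy (by linarith) (by linarith)]
  congr 1
  have he : q - 1 + 1 = q := by ring
  rw [he]
  field_simp

lemma layer_master {q : ℝ} (hq : 1 < q) (x y : ℝ) :
    ENNReal.ofReal (|x - y| ^ q) =
      ∫⁻ s, ∫⁻ t, ((if x ≤ s ∧ t < y then Wq q s t else 0) +
        (if y ≤ s ∧ t < x then Wq q s t else 0)) := by
  rcases le_total x y with hxy | hyx
  · have dead : ∀ s t : ℝ, (if y ≤ s ∧ t < x then Wq q s t else 0) = 0 := by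
      intro s t
      by_cases h : y ≤ s ∧ t < x
      · rw [if_pos h, Wq, if_neg (by push_neg; linarith [h.1, h.2])]
      · rw [if_neg h]
    simp only [dead, add_zero]
    rw [layer_aux hq hxy, abs_sub_comm, abs_of_nonneg (sub_nonneg.2 hxy)]
  · have dead : ∀ s t : ℝ, (if x ≤ s ∧ t < y then Wq q s t else 0) = 0 := by
      intro s t
      by_cases h : x ≤ s ∧ t < y
      · rw [if_pos h, Wq, if_neg (by push_neg; linarith [h.1, h.2])]
      · rw [if_neg h]
    simp only [dead, zero_add]
    rw [layer_aux hq hyx, abs_of_nonneg (sub_nonneg.2 hyx)]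

noncomputable def FF (q : ℝ) (w : (ℝ × ℝ) × ℝ × ℝ) : ℝ≥0∞ :=
  Wq q w.2.1 w.2.2 *
    ((setA w.2.1 w.2.2).indicator 1 w.1 + (setB w.2.1 w.2.2).indicator 1 w.1)

lemma measurable_Wq_pair {q : ℝ} : Measurable (fun st : ℝ × ℝ => Wq q st.1 st.2) := by
  unfold Wq
  apply Measurable.ite (measurableSet_lt measurable_fst measurable_snd)
  · exact (((measurable_snd.sub measurable_fst).pow measurable_const).const_mul
      (q * (q-1))).ennreal_ofReal
  · exact measurable_const

lemma measurable_FF {q : ℝ} : Measurable (FF q) := by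
  unfold FF
  refine Measurable.mul (measurable_Wq_pair.comp measurable_snd) ?_
  refine Measurable.add ?_ ?_
  · show Measurable ({w : (ℝ × ℝ) × ℝ × ℝ | w.1.1 ≤ w.2.1 ∧ w.2.2 < w.1.2}.indicator
        (fun _ => (1 : ℝ≥0∞)))
    exact measurable_const.indicator
      ((measurableSet_le (measurable_fst.comp measurable_fst)
          (measurable_fst.comp measurable_snd)).inter
        (measurableSet_lt (measurable_snd.comp measurable_snd)
          (measurable_snd.comp measurable_fst)))
  · show Measurable ({w : (ℝ × ℝ) × ℝ × ℝ | w.1.2 ≤ w.2.1 ∧ w.2.2 < w.1.1}.indicator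
        (fun _ => (1 : ℝ≥0∞)))
    exact measurable_const.indicator
      ((measurableSet_le (measurable_snd.comp measurable_fst)
          (measurable_fst.comp measurable_snd)).inter
        (measurableSet_lt (measurable_snd.comp measurable_snd)
          (measurable_fst.comp measurable_fst)))

lemma Wq_ne_top {q s t : ℝ} : Wq q s t ≠ ⊤ := by
  unfold Wq
  split_ifs
  · exact ENNReal.ofReal_ne_top
  · exact ENNReal.zero_ne_top

lemma costRepr {q : ℝ} (hq : 1 < q) (κ : Measure (ℝ × ℝ)) [IsFiniteMeasure κ] :
    ∫⁻ z, ENNReal.ofReal (|z.1 - z.2| ^ q) ∂κ =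
      ∫⁻ s, ∫⁻ t, Wq q s t * (κ (setA s t) + κ (setB s t)) := by
  have hpt : ∀ z : ℝ × ℝ, ENNReal.ofReal (|z.1 - z.2| ^ q) =
      ∫⁻ s, ∫⁻ t, FF q (z, (s, t)) := by
    intro z
    rw [layer_master hq z.1 z.2]
    refine lintegral_congr fun s => lintegral_congr fun t => ?_
    unfold FF setA setB Wq
    simp only [indicator]
    by_cases h1 : z.1 ≤ s ∧ t < z.2 <;> by_cases h2 : z.2 ≤ s ∧ t < z.1 <;>
      simp [h1, h2, mul_add]
  calc ∫⁻ z, ENNReal.ofReal (|z.1 - z.2| ^ q) ∂κ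
      = ∫⁻ z, ∫⁻ s, ∫⁻ t, FF q (z, (s, t)) ∂volume ∂volume ∂κ := lintegral_congr hpt
    _ = ∫⁻ s, ∫⁻ z, ∫⁻ t, FF q (z, (s, t)) ∂volume ∂κ ∂volume := by
        have hm : Measurable (Function.uncurry fun (z : ℝ × ℝ) (s : ℝ) =>
            ∫⁻ t, FF q (z, (s, t))) := by
          have hFm : Measurable (fun w : ((ℝ × ℝ) × ℝ) × ℝ => FF q (w.1.1, (w.1.2, w.2))) :=
            measurable_FF.comp
              ((measurable_fst.comp measurable_fst).prodMk
                ((measurable_snd.comp measurable_fst).prodMk measurable_snd))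
          exact Measurable.lintegral_prod_right'
            (f := fun w : ((ℝ × ℝ) × ℝ) × ℝ => FF q (w.1.1, (w.1.2, w.2))) hFm
        exact lintegral_lintegral_swap hm.aemeasurable
    _ = ∫⁻ s, ∫⁻ t, ∫⁻ z, FF q (z, (s, t)) ∂κ ∂volume ∂volume := by
        refine lintegral_congr fun s => ?_
        have hm : Measurable (Function.uncurry fun (z : ℝ × ℝ) (t : ℝ) =>
            FF q (z, (s, t))) :=
          measurable_FF.comp
            (measurable_fst.prodMk (measurable_const.prodMk measurable_snd))
        exact lintegral_lintegral_swap hm.aemeasurable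
    _ = ∫⁻ s, ∫⁻ t, Wq q s t * (κ (setA s t) + κ (setB s t)) := by
        refine lintegral_congr fun s => lintegral_congr fun t => ?_
        have : (fun z : ℝ × ℝ => FF q (z, (s, t))) =
            fun z => Wq q s t * ((setA s t).indicator 1 z + (setB s t).indicator 1 z) := rfl
        rw [this, lintegral_const_mul' _ _ Wq_ne_top,
          lintegral_add_left (f := (setA s t).indicator 1) (measurable_one.indicator (measurable_setA s t)) _,
          lintegral_indicator_one (measurable_setA s t),
          lintegral_indicator_one (measurable_setB s t)]

noncomputable def GG (w : (ℝ × ℝ) × ℝ) : ℝ≥0∞ :=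
  (setA w.2 w.2).indicator 1 w.1 + (setB w.2 w.2).indicator 1 w.1

lemma measurable_GG : Measurable GG := by
  unfold GG
  refine Measurable.add ?_ ?_
  · show Measurable ({w : (ℝ × ℝ) × ℝ | w.1.1 ≤ w.2 ∧ w.2 < w.1.2}.indicator
        (fun _ => (1 : ℝ≥0∞)))
    exact measurable_const.indicator
      ((measurableSet_le (measurable_fst.comp measurable_fst) measurable_snd).inter
        (measurableSet_lt measurable_snd (measurable_snd.comp measurable_fst)))
  · show Measurable ({w : (ℝ × ℝ) × ℝ | w.1.2 ≤ w.2 ∧ w.2 < w.1.1}.indicator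
        (fun _ => (1 : ℝ≥0∞)))
    exact measurable_const.indicator
      ((measurableSet_le (measurable_snd.comp measurable_fst) measurable_snd).inter
        (measurableSet_lt measurable_snd (measurable_fst.comp measurable_fst)))

lemma costRepr1 (κ : Measure (ℝ × ℝ)) [IsFiniteMeasure κ] :
    ∫⁻ z, ENNReal.ofReal |z.1 - z.2| ∂κ =
      ∫⁻ s, (κ (setA s s) + κ (setB s s)) := by
  have hpt : ∀ z : ℝ × ℝ, ENNReal.ofReal |z.1 - z.2| = ∫⁻ s, GG (z, s) := by
    intro z
    have hfun : (fun s => GG (z, s)) =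
        fun s => (Ico z.1 z.2).indicator 1 s + (Ico z.2 z.1).indicator 1 s := by
      funext s
      unfold GG setA setB
      rcases le_or_gt z.1 s with h1 | h1 <;> rcases lt_or_ge s z.2 with h2 | h2 <;>
        rcases le_or_gt z.2 s with h3 | h3 <;> rcases lt_or_ge s z.1 with h4 | h4 <;>
        simp [indicator, h1, h2, h3, h4, mem_Ico] <;> first | rfl | linarith
    rw [hfun, lintegral_add_left (measurable_one.indicator measurableSet_Ico),
      lintegral_indicator_one measurableSet_Ico, lintegral_indicator_one measurableSet_Ico,
      Real.volume_Ico, Real.volume_Ico]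
    rcases le_total z.1 z.2 with h | h
    · rw [abs_sub_comm, abs_of_nonneg (sub_nonneg.2 h),
        ENNReal.ofReal_of_nonpos (show z.1 - z.2 ≤ 0 by linarith), add_zero]
    · rw [abs_of_nonneg (sub_nonneg.2 h),
        ENNReal.ofReal_of_nonpos (show z.2 - z.1 ≤ 0 by linarith), zero_add]
  calc ∫⁻ z, ENNReal.ofReal |z.1 - z.2| ∂κ
      = ∫⁻ z, ∫⁻ s, GG (z, s) ∂volume ∂κ := lintegral_congr hpt
    _ = ∫⁻ s, ∫⁻ z, GG (z, s) ∂κ ∂volume := by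
        exact lintegral_lintegral_swap measurable_GG.aemeasurable
    _ = ∫⁻ s, (κ (setA s s) + κ (setB s s)) := by
        refine lintegral_congr fun s => ?_
        have : (fun z : ℝ × ℝ => GG (z, s)) =
            fun z => (setA s s).indicator 1 z + (setB s s).indicator 1 z := rfl
        rw [this, lintegral_add_left (measurable_one.indicator (measurable_setA s s)),
          lintegral_indicator_one (measurable_setA s s),
          lintegral_indicator_one (measurable_setB s s)]

end AuxWasserstein

/-- On ℝ, the `L^q` distance between quantile functions is a lower bound for the cost of
any coupling of `μ` and `ν`, and the `q`-Wasserstein distance to the `q`-th power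
(the infimum over couplings of the expected `q`-th power cost) equals it. -/
theorem wasserstein_eq_quantile_distance
    (q : ℝ) (hq : 1 ≤ q)
    (μ ν : Measure ℝ) [IsProbabilityMeasure μ] [IsProbabilityMeasure ν]
    (hμ : ∫⁻ x, ENNReal.ofReal (|x| ^ q) ∂μ < ⊤)
    (hν : ∫⁻ x, ENNReal.ofReal (|x| ^ q) ∂ν < ⊤) :
    (∀ γ : Measure (ℝ × ℝ), IsProbabilityMeasure γ →
        γ.map Prod.fst = μ → γ.map Prod.snd = ν →
        (∫⁻ p in Set.Ioo (0 : ℝ) 1,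
          ENNReal.ofReal (|quantileFn μ p - quantileFn ν p| ^ q)) ≤
          ∫⁻ z, ENNReal.ofReal (|z.1 - z.2| ^ q) ∂γ) ∧
    (⨅ γ : {γ : Measure (ℝ × ℝ) //
        IsProbabilityMeasure γ ∧ γ.map Prod.fst = μ ∧ γ.map Prod.snd = ν},
        ∫⁻ z, ENNReal.ofReal (|z.1 - z.2| ^ q) ∂(γ : Measure (ℝ × ℝ))) =
      ∫⁻ p in Set.Ioo (0 : ℝ) 1,
        ENNReal.ofReal (|quantileFn μ p - quantileFn ν p| ^ q) := by
  classical
  have hpair : Measurable fun p => (qf μ p, qf ν p) :=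
    measurable_qf'.prodMk measurable_qf'
  set γ₀ : Measure (ℝ × ℝ) :=
    Measure.map (fun p => (qf μ p, qf ν p)) (volume.restrict (Set.Ioo (0:ℝ) 1)) with hγ₀
  have hγ₀P : IsProbabilityMeasure γ₀ := Measure.isProbabilityMeasure_map hpair.aemeasurable
  have hfst : γ₀.map Prod.fst = μ := by
    rw [hγ₀, Measure.map_map measurable_fst hpair]
    exact map_qf
  have hsnd : γ₀.map Prod.snd = ν := by
    rw [hγ₀, Measure.map_map measurable_snd hpair]
    exact map_qf
  have hcost_meas : Measurable fun z : ℝ × ℝ => ENNReal.ofReal (|z.1 - z.2| ^ q) :=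
    (((measurable_fst.sub measurable_snd).abs.pow measurable_const)).ennreal_ofReal
  have hcost₀ : ∫⁻ z, ENNReal.ofReal (|z.1 - z.2| ^ q) ∂γ₀ =
      ∫⁻ p in Set.Ioo (0:ℝ) 1, ENNReal.ofReal (|qf μ p - qf ν p| ^ q) := by
    rw [hγ₀, lintegral_map hcost_meas hpair]
  have hquant : (∫⁻ p in Set.Ioo (0:ℝ) 1,
      ENNReal.ofReal (|quantileFn μ p - quantileFn ν p| ^ q)) =
      ∫⁻ p in Set.Ioo (0:ℝ) 1, ENNReal.ofReal (|qf μ p - qf ν p| ^ q) := by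
    refine setLIntegral_congr_fun measurableSet_Ioo (fun p hp => ?_)
    rw [qf_eq_on hp, qf_eq_on hp]
  have part1 : ∀ γ : Measure (ℝ × ℝ), IsProbabilityMeasure γ →
      γ.map Prod.fst = μ → γ.map Prod.snd = ν →
      (∫⁻ p in Set.Ioo (0 : ℝ) 1,
        ENNReal.ofReal (|quantileFn μ p - quantileFn ν p| ^ q)) ≤
        ∫⁻ z, ENNReal.ofReal (|z.1 - z.2| ^ q) ∂γ := by
    intro γ hP h1 h2
    haveI := hP
    rw [hquant, ← hcost₀]
    have hsetA : ∀ s t : ℝ, γ₀ (setA s t) ≤ γ (setA s t) := by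
      intro s t
      rw [hγ₀, Measure.map_apply hpair (measurable_setA s t)]
      exact couple_lower h1 h2 s t
    have hsetB : ∀ s t : ℝ, γ₀ (setB s t) ≤ γ (setB s t) := by
      intro s t
      rw [hγ₀, Measure.map_apply hpair (measurable_setB s t)]
      set γ' : Measure (ℝ × ℝ) := γ.map Prod.swap with hγ'
      haveI : IsProbabilityMeasure γ' := Measure.isProbabilityMeasure_map
        measurable_swap.aemeasurable
      have h1' : γ'.map Prod.fst = ν := by
        rw [hγ', Measure.map_map measurable_fst measurable_swap]
        exact h2
      have h2' : γ'.map Prod.snd = μ := by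
        rw [hγ', Measure.map_map measurable_snd measurable_swap]
        exact h1
      have hswap : γ' {z : ℝ × ℝ | z.1 ≤ s ∧ t < z.2} = γ (setB s t) := by
        show (Measure.map Prod.swap γ) (setA s t) = γ (setB s t)
        rw [Measure.map_apply measurable_swap (measurable_setA s t)]
        rfl
      have hcl := couple_lower h1' h2' s t
      rw [hswap] at hcl
      exact hcl
    rcases eq_or_lt_of_le hq with hq1 | hq1
    · simp only [← hq1, Real.rpow_one]
      rw [costRepr1 γ₀, costRepr1 γ]
      exact lintegral_mono fun s => add_le_add (hsetA s s) (hsetB s s)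
    · rw [costRepr hq1 γ₀, costRepr hq1 γ]
      refine lintegral_mono fun s => lintegral_mono fun t => ?_
      exact mul_le_mul_right (add_le_add (hsetA s t) (hsetB s t)) _
  refine ⟨part1, le_antisymm ?_ ?_⟩
  · exact iInf_le_of_le ⟨γ₀, hγ₀P, hfst, hsnd⟩ (le_of_eq (hcost₀.trans hquant.symm))
  · refine le_iInf ?_
    rintro ⟨γ, hP, h1, h2⟩
    exact part1 γ hP h1 h2
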